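/- Let A be a symmetric, irreducible, nonnegative n×n real matrix and P = {P₁,...,P_k} a partition of [n] such that A[Pᵢ,Pⱼ] is regular (equal row sums and equal column sums) for all 1 ≤ i < j ≤ k. Then μ₁(A) = μ₁(A|P×P) if and only if A[Pᵢ,Pᵢ] is regular for every i ∈ [k]. -/

import Mathlib

def partSet {n k : ℕ} (P : Fin n → Fin k) (i : Fin k) : Finset (Fin n) :=
  Finset.univ.filter (fun v => P v = i)

noncomputable def quotMat {m n k l : ℕ} (A : Matrix (Fin m) (Fin n) ℝ)
    (P : Fin m → Fin k) (Q : Fin n → Fin l) : Matrix (Fin k) (Fin l) ℝ :=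
  fun p q => (1 / Real.sqrt (((partSet P p).card : ℝ) * ((partSet Q q).card : ℝ))) *
    ∑ i ∈ partSet P p, ∑ j ∈ partSet Q q, A i j

def BlockRegular {m n : ℕ} (A : Matrix (Fin m) (Fin n) ℝ)
    (R : Finset (Fin m)) (C : Finset (Fin n)) : Prop :=
  (∀ i ∈ R, ∀ i' ∈ R, ∑ j ∈ C, A i j = ∑ j ∈ C, A i' j) ∧
  (∀ j ∈ C, ∀ j' ∈ C, ∑ i ∈ R, A i j = ∑ i ∈ R, A i j')

def MatIrred {n : ℕ} (A : Matrix (Fin n) (Fin n) ℝ) : Prop :=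
  ∀ S : Finset (Fin n), S.Nonempty → S ≠ Finset.univ →
    ∃ i ∈ S, ∃ j ∈ Sᶜ, A i j ≠ 0

section
open Matrix Finset

namespace Stmt15Aux

variable {m : ℕ} {A : Matrix (Fin m) (Fin m) ℝ}

noncomputable def coef (hA : A.IsHermitian) (x : Fin m → ℝ) (j : Fin m) : ℝ :=
  ⇑(hA.eigenvectorBasis j) ⬝ᵥ x

lemma inner_eq_dot (u v : EuclideanSpace ℝ (Fin m)) :
    (inner ℝ u v : ℝ) = (⇑u : Fin m → ℝ) ⬝ᵥ ⇑v := by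
  simp [PiLp.inner_apply, dotProduct, RCLike.inner_apply, conj_trivial]
  exact Finset.sum_congr rfl fun _ _ => mul_comm _ _

lemma sum_coef_smul (hA : A.IsHermitian) (x : Fin m → ℝ) :
    x = ∑ j, coef hA x j • ⇑(hA.eigenvectorBasis j) := by
  have h := hA.eigenvectorBasis.sum_repr' (WithLp.toLp 2 x : EuclideanSpace ℝ (Fin m))
  have h2 : (WithLp.toLp 2 x : EuclideanSpace ℝ (Fin m))
      = ∑ j, (inner ℝ (hA.eigenvectorBasis j) (WithLp.toLp 2 x : EuclideanSpace ℝ (Fin m)) : ℝ)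
          • hA.eigenvectorBasis j := h.symm
  funext i
  have key : x i = ∑ j, (inner ℝ (hA.eigenvectorBasis j) (WithLp.toLp 2 x : EuclideanSpace ℝ (Fin m)) : ℝ)
      * hA.eigenvectorBasis j i := by
    calc x i = ((∑ j, (inner ℝ (hA.eigenvectorBasis j) (WithLp.toLp 2 x : EuclideanSpace ℝ (Fin m)) : ℝ)
          • hA.eigenvectorBasis j : EuclideanSpace ℝ (Fin m)) : Fin m → ℝ) i :=
        congrArg (fun v : EuclideanSpace ℝ (Fin m) => (v : Fin m → ℝ) i) h2
    _ = ∑ j, (inner ℝ (hA.eigenvectorBasis j) (WithLp.toLp 2 x : EuclideanSpace ℝ (Fin m)) : ℝ)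
          * hA.eigenvectorBasis j i := by simp
  rw [Finset.sum_apply]
  simpa [inner_eq_dot, coef, dotProduct] using key

lemma basis_dot (hA : A.IsHermitian) (j j' : Fin m) :
    ⇑(hA.eigenvectorBasis j) ⬝ᵥ ⇑(hA.eigenvectorBasis j') = if j = j' then 1 else 0 := by
  have h := hA.eigenvectorBasis.orthonormal
  rw [orthonormal_iff_ite] at h
  have := h j j'
  rw [inner_eq_dot] at this
  simpa using this

lemma dot_sum_right {x : Fin m → ℝ} {s : Finset (Fin m)} (f : Fin m → Fin m → ℝ) :
    x ⬝ᵥ (∑ j ∈ s, f j) = ∑ j ∈ s, x ⬝ᵥ f j := by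
  simp [dotProduct, Finset.sum_apply, Finset.mul_sum]
  exact Finset.sum_comm

lemma mulVec_sum' {s : Finset (Fin m)} (f : Fin m → Fin m → ℝ) :
    A *ᵥ (∑ j ∈ s, f j) = ∑ j ∈ s, A *ᵥ f j :=
  map_sum A.mulVecLin f s

lemma dot_coef (hA : A.IsHermitian) (x : Fin m → ℝ) (j : Fin m) :
    x ⬝ᵥ ⇑(hA.eigenvectorBasis j) = coef hA x j := by
  rw [coef, dotProduct_comm]

lemma mulVec_expand (hA : A.IsHermitian) (x : Fin m → ℝ) :
    A *ᵥ x = ∑ j, (hA.eigenvalues j * coef hA x j) • ⇑(hA.eigenvectorBasis j) := by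
  conv_lhs => rw [sum_coef_smul hA x]
  rw [mulVec_sum']
  refine Finset.sum_congr rfl fun j _ => ?_
  rw [mulVec_smul, hA.mulVec_eigenvectorBasis j, smul_smul, mul_comm]

lemma dot_self_expand (hA : A.IsHermitian) (x : Fin m → ℝ) :
    x ⬝ᵥ x = ∑ j, (coef hA x j)^2 := by
  conv_lhs => rw [show (x ⬝ᵥ x) = x ⬝ᵥ (∑ j, coef hA x j • ⇑(hA.eigenvectorBasis j)) by
    rw [← sum_coef_smul hA x]]
  rw [dot_sum_right]
  refine Finset.sum_congr rfl fun j _ => ?_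
  rw [dotProduct_smul, dot_coef, smul_eq_mul, sq]

lemma dot_mulVec_expand (hA : A.IsHermitian) (x : Fin m → ℝ) :
    x ⬝ᵥ (A *ᵥ x) = ∑ j, hA.eigenvalues j * (coef hA x j)^2 := by
  rw [mulVec_expand hA x, dot_sum_right]
  refine Finset.sum_congr rfl fun j _ => ?_
  rw [dotProduct_smul, dot_coef, smul_eq_mul, sq]
  ring

lemma dot_self_nonneg (x : Fin m → ℝ) : 0 ≤ x ⬝ᵥ x :=
  Finset.sum_nonneg fun i _ => mul_self_nonneg (x i)

lemma dot_self_pos {x : Fin m → ℝ} (hx : x ≠ 0) : 0 < x ⬝ᵥ x := by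
  obtain ⟨i, hi⟩ : ∃ i, x i ≠ 0 := Function.ne_iff.mp hx
  refine Finset.sum_pos' (fun j _ => mul_self_nonneg (x j)) ⟨i, Finset.mem_univ i, ?_⟩
  exact mul_self_pos.mpr hi

lemma eigen_le_sup (hA : A.IsHermitian) (i : Fin m) :
    hA.eigenvalues i ≤ ⨆ j, hA.eigenvalues j :=
  le_ciSup (Set.Finite.bddAbove (Set.finite_range _)) i

lemma exists_sup_eigen (hm : 0 < m) (hA : A.IsHermitian) :
    ∃ i₀, (⨆ i, hA.eigenvalues i) = hA.eigenvalues i₀ := by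
  haveI : Nonempty (Fin m) := ⟨⟨0, hm⟩⟩
  obtain ⟨i₀, h⟩ := Finite.exists_max hA.eigenvalues
  exact ⟨i₀, le_antisymm (ciSup_le h) (le_ciSup (Set.Finite.bddAbove (Set.finite_range _)) i₀)⟩

lemma rayleigh_le (hA : A.IsHermitian) (x : Fin m → ℝ) :
    x ⬝ᵥ (A *ᵥ x) ≤ (⨆ i, hA.eigenvalues i) * (x ⬝ᵥ x) := by
  rw [dot_mulVec_expand hA, dot_self_expand hA, Finset.mul_sum]
  exact Finset.sum_le_sum fun j _ =>
    mul_le_mul_of_nonneg_right (eigen_le_sup hA j) (sq_nonneg _)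

lemma rayleigh_eq (hA : A.IsHermitian) (x : Fin m → ℝ)
    (h : x ⬝ᵥ (A *ᵥ x) = (⨆ i, hA.eigenvalues i) * (x ⬝ᵥ x)) :
    A *ᵥ x = (⨆ i, hA.eigenvalues i) • x := by
  set μ := ⨆ i, hA.eigenvalues i with hμ
  have h0 : ∑ j, (μ - hA.eigenvalues j) * (coef hA x j)^2 = 0 := by
    simp only [sub_mul, Finset.sum_sub_distrib, ← Finset.mul_sum, ← dot_self_expand hA,
      ← dot_mulVec_expand hA, h, sub_self]
  have hterm : ∀ j ∈ Finset.univ, (μ - hA.eigenvalues j) * (coef hA x j)^2 = 0 :=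
    (Finset.sum_eq_zero_iff_of_nonneg fun j _ =>
      mul_nonneg (sub_nonneg.mpr (eigen_le_sup hA j)) (sq_nonneg _)).mp h0
  have key : ∀ j, hA.eigenvalues j * coef hA x j = μ * coef hA x j := by
    intro j
    rcases mul_eq_zero.mp (hterm j (Finset.mem_univ j)) with h1 | h1
    · rw [sub_eq_zero] at h1; rw [← h1]
    · rw [pow_eq_zero_iff (by norm_num)] at h1; rw [h1, mul_zero, mul_zero]
  rw [mulVec_expand hA x]
  conv_rhs => rw [sum_coef_smul hA x, Finset.smul_sum]
  exact Finset.sum_congr rfl fun j _ => by rw [key j, smul_smul]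

lemma exists_top_eigenvector (hm : 0 < m) (hA : A.IsHermitian) :
    ∃ v : Fin m → ℝ, v ⬝ᵥ v = 1 ∧ A *ᵥ v = (⨆ i, hA.eigenvalues i) • v := by
  obtain ⟨i₀, h⟩ := exists_sup_eigen hm hA
  refine ⟨⇑(hA.eigenvectorBasis i₀), by simpa using basis_dot hA i₀ i₀, ?_⟩
  rw [hA.mulVec_eigenvectorBasis i₀, h]

lemma eigenvalue_le_sup (hA : A.IsHermitian) {t : ℝ} {y : Fin m → ℝ} (hy : y ≠ 0)
    (h : A *ᵥ y = t • y) : t ≤ ⨆ i, hA.eigenvalues i := by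
  have hpos := dot_self_pos hy
  have := rayleigh_le hA y
  rw [h, dotProduct_smul, smul_eq_mul] at this
  exact le_of_mul_le_mul_right (by linarith [this]) hpos


lemma herm_symm (hA : A.IsHermitian) (i j : Fin m) : A j i = A i j := by
  have := congrFun (congrFun hA i) j
  simpa [Matrix.conjTranspose_apply] using this

lemma abs_eigenvector (hA : A.IsHermitian) (hnonneg : ∀ i j, 0 ≤ A i j) {x : Fin m → ℝ}
    (hx : A *ᵥ x = (⨆ i, hA.eigenvalues i) • x) :
    A *ᵥ (fun i => |x i|) = (⨆ i, hA.eigenvalues i) • (fun i => |x i|) := by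
  set μ := ⨆ i, hA.eigenvalues i with hμ
  set z : Fin m → ℝ := fun i => |x i| with hz
  have h1 : x ⬝ᵥ (A *ᵥ x) = μ * (x ⬝ᵥ x) := by rw [hx, dotProduct_smul, smul_eq_mul]
  have h2 : z ⬝ᵥ z = x ⬝ᵥ x := by simp [dotProduct, hz, abs_mul_abs_self]
  have h3 : x ⬝ᵥ (A *ᵥ x) ≤ z ⬝ᵥ (A *ᵥ z) := by
    simp only [dotProduct, mulVec, dotProduct, Finset.mul_sum]
    refine Finset.sum_le_sum fun i _ => Finset.sum_le_sum fun j _ => ?_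
    calc x i * (A i j * x j) ≤ |x i * (A i j * x j)| := le_abs_self _
    _ = z i * (A i j * z j) := by
        rw [abs_mul, abs_mul, abs_of_nonneg (hnonneg i j)]
  have h4 : z ⬝ᵥ (A *ᵥ z) ≤ μ * (z ⬝ᵥ z) := rayleigh_le hA z
  exact rayleigh_eq hA z (le_antisymm h4 (by rw [h2]; linarith))

lemma perron_nonzero (hA : A.IsHermitian) (hnonneg : ∀ i j, 0 ≤ A i j)
    (hirr : MatIrred A) {x : Fin m → ℝ} (hx0 : x ≠ 0)
    (hx : A *ᵥ x = (⨆ i, hA.eigenvalues i) • x) : ∀ i, x i ≠ 0 := by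
  set μ := ⨆ i, hA.eigenvalues i with hμ
  have hz := abs_eigenvector hA hnonneg hx
  set z : Fin m → ℝ := fun i => |x i| with hzdef
  by_contra hcon
  push_neg at hcon
  obtain ⟨i, hi⟩ := hcon
  set S : Finset (Fin m) := Finset.univ.filter (fun v => x v ≠ 0) with hS
  have hSne : S.Nonempty := by
    obtain ⟨a, ha⟩ := Function.ne_iff.mp hx0
    refine ⟨a, ?_⟩
    rw [hS, Finset.mem_filter]
    exact ⟨Finset.mem_univ a, by simpa using ha⟩
  have hSnu : S ≠ Finset.univ := by
    intro h
    have : i ∈ S := h ▸ Finset.mem_univ i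
    simp [hS, hi] at this
  obtain ⟨a, ha, b, hb, hab⟩ := hirr S hSne hSnu
  have hxa : x a ≠ 0 := by
    rw [hS, Finset.mem_filter] at ha; exact ha.2
  have hxb : x b = 0 := by
    have hb' := Finset.mem_compl.mp hb
    rw [hS, Finset.mem_filter] at hb'
    push_neg at hb'
    exact hb' (Finset.mem_univ b)
  have hzb : (A *ᵥ z) b = 0 := by
    rw [hz]; simp [hzdef, hxb]
  have hba : 0 < A b a * z a := by
    refine mul_pos ?_ (abs_pos.mpr hxa)
    exact lt_of_le_of_ne (hnonneg b a) (fun h => hab (by rw [herm_symm hA a b] at h; exact h.symm))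
  have hge : A b a * z a ≤ (A *ᵥ z) b := by
    rw [mulVec, dotProduct]
    exact Finset.single_le_sum (f := fun j => A b j * z j)
      (fun j _ => mul_nonneg (hnonneg b j) (abs_nonneg _)) (Finset.mem_univ a)
  linarith


section parts

variable {N K : ℕ} {P : Fin N → Fin K}

lemma mem_part {i : Fin N} {p : Fin K} : i ∈ partSet P p ↔ P i = p := by
  simp [partSet]

lemma part_card_pos (hsurj : Function.Surjective P) (p : Fin K) :
    0 < ((partSet P p).card : ℝ) := by
  obtain ⟨i, rfl⟩ := hsurj p
  exact_mod_cast Finset.card_pos.mpr ⟨i, mem_part.mpr rfl⟩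

lemma sqrt_card_pos (hsurj : Function.Surjective P) (p : Fin K) :
    0 < Real.sqrt ((partSet P p).card) :=
  Real.sqrt_pos.mpr (part_card_pos hsurj p)

lemma sq_sqrt_card (p : Fin K) :
    Real.sqrt ((partSet P p).card) * Real.sqrt ((partSet P p).card)
      = ((partSet P p).card : ℝ) :=
  Real.mul_self_sqrt (by positivity)

lemma sum_parts (g : Fin N → ℝ) : ∑ i, g i = ∑ p, ∑ i ∈ partSet P p, g i :=
  (Finset.sum_fiberwise _ _ _).symm

noncomputable def liftVec (P : Fin N → Fin K) (y : Fin K → ℝ) : Fin N → ℝ :=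
  fun i => y (P i) / Real.sqrt ((partSet P (P i)).card)

lemma liftVec_dot_self (hsurj : Function.Surjective P) (y : Fin K → ℝ) :
    liftVec P y ⬝ᵥ liftVec P y = y ⬝ᵥ y := by
  rw [dotProduct, dotProduct, sum_parts (P := P)]
  refine Finset.sum_congr rfl fun p _ => ?_
  have hconst : ∀ i ∈ partSet P p, liftVec P y i * liftVec P y i
      = (y p / Real.sqrt ((partSet P p).card)) * (y p / Real.sqrt ((partSet P p).card)) := by
    intro i hi
    rw [liftVec, mem_part.mp hi]
  rw [Finset.sum_congr rfl hconst, Finset.sum_const, nsmul_eq_mul]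
  have h1 := sqrt_card_pos hsurj p
  field_simp
  rw [Real.sq_sqrt (by positivity)]; ring

lemma mulVec_liftVec (A : Matrix (Fin N) (Fin N) ℝ) (y : Fin K → ℝ) (i : Fin N) :
    (A *ᵥ liftVec P y) i
      = ∑ q, (y q / Real.sqrt ((partSet P q).card)) * ∑ j ∈ partSet P q, A i j := by
  rw [mulVec, dotProduct, sum_parts (P := P)]
  refine Finset.sum_congr rfl fun q _ => ?_
  rw [Finset.mul_sum]
  refine Finset.sum_congr rfl fun j hj => ?_
  rw [liftVec, mem_part.mp hj, mul_comm]

lemma liftVec_dot_mulVec (hsurj : Function.Surjective P)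
    (A : Matrix (Fin N) (Fin N) ℝ) (y : Fin K → ℝ) :
    liftVec P y ⬝ᵥ (A *ᵥ liftVec P y) = y ⬝ᵥ (quotMat A P P *ᵥ y) := by
  have key := mulVec_liftVec (P := P) A y
  rw [dotProduct, dotProduct, sum_parts (P := P)]
  refine Finset.sum_congr rfl fun p _ => ?_
  have hconst : ∀ i ∈ partSet P p, liftVec P y i * (A *ᵥ liftVec P y) i
      = (y p / Real.sqrt ((partSet P p).card))
        * ∑ q, (y q / Real.sqrt ((partSet P q).card)) * ∑ j ∈ partSet P q, A i j := by
    intro i hi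
    rw [key i, liftVec, mem_part.mp hi]
  rw [Finset.sum_congr rfl hconst, ← Finset.mul_sum, Finset.sum_comm]
  simp only [mulVec, dotProduct, quotMat]
  rw [Finset.mul_sum, Finset.mul_sum]
  refine Finset.sum_congr rfl fun q _ => ?_
  rw [← Finset.mul_sum, Real.sqrt_mul (by positivity),
    div_eq_mul_inv, div_eq_mul_inv, one_div, mul_inv]
  ring

noncomputable def resVec (P : Fin N → Fin K) (w : Fin N → ℝ) : Fin K → ℝ :=
  fun p => (∑ i ∈ partSet P p, w i) / Real.sqrt ((partSet P p).card)

lemma quot_eigen (hsurj : Function.Surjective P) {A : Matrix (Fin N) (Fin N) ℝ}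
    {w : Fin N → ℝ} {μ : ℝ} (hw : A *ᵥ w = μ • w)
    (hreg : ∀ p q : Fin K, ∀ j ∈ partSet P q, ∀ j' ∈ partSet P q,
      ∑ i ∈ partSet P p, A i j = ∑ i ∈ partSet P p, A i j') :
    quotMat A P P *ᵥ resVec P w = μ • resVec P w := by
  funext p
  -- choose a representative of each part
  have hne : ∀ q : Fin K, ∃ j, j ∈ partSet P q := by
    intro q; obtain ⟨j, rfl⟩ := hsurj q; exact ⟨j, mem_part.mpr rfl⟩
  choose rep hrep using hne
  set K' : Fin K → ℝ := fun q => ∑ i ∈ partSet P p, A i (rep q) with hK'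
  have hcol : ∀ q : Fin K, ∀ j ∈ partSet P q, ∑ i ∈ partSet P p, A i j = K' q :=
    fun q j hj => hreg p q j hj (rep q) (hrep q)
  have hS : ∀ q : Fin K, ∑ i ∈ partSet P p, ∑ j ∈ partSet P q, A i j
      = ((partSet P q).card : ℝ) * K' q := by
    intro q
    refine Finset.sum_comm.trans ?_
    rw [Finset.sum_congr rfl (fun j hj => hcol q j hj), Finset.sum_const, nsmul_eq_mul]
  -- right hand side
  have hrhs : (μ • resVec P w) p
      = (∑ q, K' q * ∑ j ∈ partSet P q, w j) / Real.sqrt ((partSet P p).card) := by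
    have h1 : ∀ i, (A *ᵥ w) i = μ * w i := fun i => by rw [hw]; rfl
    have h2 : ∑ i ∈ partSet P p, μ * w i = ∑ q, K' q * ∑ j ∈ partSet P q, w j := by
      rw [← Finset.sum_congr rfl (fun i _ => h1 i)]
      have h3 : ∀ i, (A *ᵥ w) i = ∑ q, ∑ j ∈ partSet P q, A i j * w j := by
        intro i; rw [mulVec, dotProduct, sum_parts (P := P)]
      rw [Finset.sum_congr rfl (fun i _ => h3 i), Finset.sum_comm]
      refine Finset.sum_congr rfl fun q _ => ?_
      rw [Finset.sum_comm, Finset.mul_sum]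
      refine Finset.sum_congr rfl fun j hj => ?_
      rw [← Finset.sum_mul, hcol q j hj]
    show μ * resVec P w p = _
    rw [resVec, ← h2, ← Finset.mul_sum, mul_div_assoc]
  -- left hand side
  rw [hrhs]
  show ∑ q, quotMat A P P p q * resVec P w q = _
  rw [Finset.sum_div]
  refine Finset.sum_congr rfl fun q _ => ?_
  rw [quotMat, resVec, hS q, Real.sqrt_mul (by positivity)]
  have hq := sqrt_card_pos hsurj q
  have hcq : Real.sqrt ((partSet P q).card) * Real.sqrt ((partSet P q).card)
      = ((partSet P q).card : ℝ) := sq_sqrt_card q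
  have hp := sqrt_card_pos hsurj p
  rw [← hcq]
  field_simp
  rw [Real.sqrt_sq hq.le]

end parts

end Stmt15Aux


end

open Stmt15Aux Matrix Finset in
/-- for a symmetric irreducible nonnegative matrix `A` and a partition
with all off-diagonal blocks `A[P i, P j]` (`i ≠ j`) regular,
`μ₁(A) = μ₁(A|P×P)` if and only if all diagonal blocks `A[P i, P i]` are regular. -/
theorem stmt15 {n k : ℕ} (hn : 0 < n) (hk : 0 < k)
    (A : Matrix (Fin n) (Fin n) ℝ) (hA : A.IsHermitian)
    (hnonneg : ∀ i j, 0 ≤ A i j) (hirr : MatIrred A)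
    (P : Fin n → Fin k) (hsurj : Function.Surjective P)
    (hoff : ∀ i j : Fin k, i ≠ j → BlockRegular A (partSet P i) (partSet P j))
    (hB : (quotMat A P P).IsHermitian) :
    (⨆ i : Fin n, hA.eigenvalues i) = (⨆ p : Fin k, hB.eigenvalues p) ↔
      ∀ i : Fin k, BlockRegular A (partSet P i) (partSet P i) := by
  set μ := ⨆ i : Fin n, hA.eigenvalues i with hμdef
  set ν := ⨆ p : Fin k, hB.eigenvalues p with hνdef
  obtain ⟨y, hy1, hy2⟩ := exists_top_eigenvector hk hB
  set x := liftVec P y with hxdef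
  have hx1 : x ⬝ᵥ x = 1 := (liftVec_dot_self hsurj y).trans hy1
  have hx2 : x ⬝ᵥ (A *ᵥ x) = ν := by
    rw [hxdef, liftVec_dot_mulVec hsurj A y, hy2, dotProduct_smul, smul_eq_mul, hy1, mul_one]
  have hνμ : ν ≤ μ := by
    have := rayleigh_le hA x
    rw [hx2, hx1, mul_one] at this
    exact this
  constructor
  · intro heq p
    have hxA : A *ᵥ x = μ • x := rayleigh_eq hA x (by rw [hx2, hx1, mul_one, ← hμdef]; exact heq.symm)
    have hx0 : x ≠ 0 := by
      intro h
      rw [h] at hx1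
      simp at hx1
    have hnz := perron_nonzero hA hnonneg hirr hx0 hxA
    have hynz : ∀ q, y q ≠ 0 := by
      intro q hq0
      obtain ⟨i, rfl⟩ := hsurj q
      exact hnz i (by rw [hxdef]; simp [liftVec, hq0])
    have hrow : ∀ i ∈ partSet P p, ∀ i' ∈ partSet P p,
        ∑ j ∈ partSet P p, A i j = ∑ j ∈ partSet P p, A i' j := by
      intro i hi i' hi'
      have e1 := mulVec_liftVec (P := P) A y i
      have e2 := mulVec_liftVec (P := P) A y i'
      have hxi : x i = y p / Real.sqrt ((partSet P p).card) := by
        rw [hxdef, liftVec, mem_part.mp hi]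
      have hxi' : x i' = y p / Real.sqrt ((partSet P p).card) := by
        rw [hxdef, liftVec, mem_part.mp hi']
      have hAeq : (A *ᵥ x) i = (A *ᵥ x) i' := by
        rw [hxA]
        show μ * x i = μ * x i'
        rw [hxi, hxi']
      rw [hxdef] at hAeq
      rw [e1, e2] at hAeq
      have hsum0 : ∑ q, ((y q / Real.sqrt ((partSet P q).card)) * ∑ j ∈ partSet P q, A i j
          - (y q / Real.sqrt ((partSet P q).card)) * ∑ j ∈ partSet P q, A i' j) = 0 := by
        rw [Finset.sum_sub_distrib, hAeq, sub_self]
      have hsingle : ∑ q, ((y q / Real.sqrt ((partSet P q).card)) * ∑ j ∈ partSet P q, A i j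
          - (y q / Real.sqrt ((partSet P q).card)) * ∑ j ∈ partSet P q, A i' j)
          = (y p / Real.sqrt ((partSet P p).card)) * ∑ j ∈ partSet P p, A i j
          - (y p / Real.sqrt ((partSet P p).card)) * ∑ j ∈ partSet P p, A i' j := by
        refine Finset.sum_eq_single_of_mem p (Finset.mem_univ p) fun q _ hq => ?_
        rw [(hoff p q hq.symm).1 i hi i' hi', sub_self]
      rw [hsingle] at hsum0
      rw [← mul_sub] at hsum0
      rcases mul_eq_zero.mp hsum0 with h | h
      · exact absurd (div_eq_zero_iff.mp h) (by
          push_neg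
          exact ⟨hynz p, ne_of_gt (sqrt_card_pos hsurj p)⟩)
      · linarith [sub_eq_zero.mp h]
    refine ⟨hrow, fun j hj j' hj' => ?_⟩
    calc ∑ i ∈ partSet P p, A i j = ∑ i ∈ partSet P p, A j i :=
          Finset.sum_congr rfl fun i _ => herm_symm hA j i
    _ = ∑ i ∈ partSet P p, A j' i := hrow j hj j' hj'
    _ = ∑ i ∈ partSet P p, A i j' := Finset.sum_congr rfl fun i _ => (herm_symm hA j' i).symm
  · intro hdiag
    obtain ⟨v, hv1, hv2⟩ := exists_top_eigenvector hn hA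
    have hv0 : v ≠ 0 := by
      intro h
      rw [h] at hv1
      simp at hv1
    have habs := abs_eigenvector hA hnonneg hv2
    have hvnz := perron_nonzero hA hnonneg hirr hv0 hv2
    set z : Fin n → ℝ := fun i => |v i| with hzdef
    have hreg : ∀ p q : Fin k, ∀ j ∈ partSet P q, ∀ j' ∈ partSet P q,
        ∑ i ∈ partSet P p, A i j = ∑ i ∈ partSet P p, A i j' := by
      intro p q j hj j' hj'
      by_cases h : p = q
      · subst h
        exact (hdiag p).2 j hj j' hj'
      · exact (hoff p q h).2 j hj j' hj'
    have hq := quot_eigen hsurj habs hreg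
    have hy0 : resVec P z ≠ 0 := by
      have hp0 : (⟨0, hk⟩ : Fin k) = ⟨0, hk⟩ := rfl
      refine Function.ne_iff.mpr ⟨⟨0, hk⟩, ?_⟩
      have hpos : 0 < resVec P z ⟨0, hk⟩ := by
        rw [resVec]
        refine div_pos ?_ (sqrt_card_pos hsurj _)
        refine Finset.sum_pos (fun i _ => abs_pos.mpr (hvnz i)) ?_
        obtain ⟨i, hi⟩ := hsurj ⟨0, hk⟩
        exact ⟨i, mem_part.mpr hi⟩
      simpa using ne_of_gt hpos
    exact le_antisymm (eigenvalue_le_sup hB hy0 hq) hνμ
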